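/- Let π : X → Y be a factor map between topological dynamical systems (X,T,ℤ^d) and (Y,S,ℤ^d), and assume π is not bounded to one. Then every closed half-space H ⊆ ℝ^d (a set of the form {x ∈ ℝ^d : ⟨x,c⟩ ≥ 0} for some nonzero c ∈ ℝ^d) contains a π-nondeterministic vector, i.e. ND_{ℓ²}(X,π) ∩ H ≠ ∅. -/

import Mathlib

open Metric Filter Topology
open scoped RealInnerProductSpace

/-- The open half-space (`ℓ²` horoball) of `ℤ^d` with outward normal vector `v`. -/
def halfSpaceZ {d : ℕ} (v : EuclideanSpace ℝ (Fin d)) : Set (Fin d → ℤ) :=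
  {g | ∑ i, (g i : ℝ) * v i < 0}

/-- The set `ND_{ℓ²}(X,ε,π)` of unit vectors `v` whose half-space `H_v` is
`(ε,π)`-nonexpansive. -/
def NDl2 {d : ℕ} {X Y : Type*} [MetricSpace X] (T : (Fin d → ℤ) → X → X) (π : X → Y)
    (ε : ℝ) : Set (EuclideanSpace ℝ (Fin d)) :=
  {v | ‖v‖ = 1 ∧ ∃ x y : X, x ≠ y ∧ π x = π y ∧
    ∀ g ∈ halfSpaceZ v, dist (T g x) (T g y) ≤ ε}

/-- A map is bounded to one if the cardinalities of its fibers are uniformly bounded. -/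
def BoundedToOne {X Y : Type*} (π : X → Y) : Prop :=
  ∃ n : ℕ, ∀ (y : Y) (s : Finset X), (∀ x ∈ s, π x = y) → s.card ≤ n

namespace NDAux

/-- Embedding of the lattice into euclidean space. -/
noncomputable def emb {d : ℕ} (g : Fin d → ℤ) : EuclideanSpace ℝ (Fin d) :=
  (WithLp.equiv 2 _).symm (fun i => (g i : ℝ))

variable {d : ℕ}

@[simp] lemma emb_apply (g : Fin d → ℤ) (i : Fin d) : emb g i = (g i : ℝ) := rfl

lemma emb_add (g h : Fin d → ℤ) : emb (g + h) = emb g + emb h := by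
  ext i; simp [emb]

lemma emb_sub (g h : Fin d → ℤ) : emb (g - h) = emb g - emb h := by
  ext i; simp [emb]

lemma inner_sum (a b : EuclideanSpace ℝ (Fin d)) : ⟪a, b⟫ = ∑ i, a i * b i := by
  simp [PiLp.inner_apply, RCLike.inner_apply, conj_trivial]
  exact Finset.sum_congr rfl (fun i _ => mul_comm _ _)

lemma abs_coord_le_norm (x : EuclideanSpace ℝ (Fin d)) (i : Fin d) : |x i| ≤ ‖x‖ := by
  have h1 : ‖x‖ ^ 2 = ∑ j, (x j) ^ 2 := by
    rw [EuclideanSpace.norm_eq, Real.sq_sqrt (by positivity)]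
    simp [sq_abs]
  have h2 : (x i) ^ 2 ≤ ∑ j, (x j) ^ 2 :=
    Finset.single_le_sum (f := fun j => (x j)^2) (fun j _ => by positivity) (Finset.mem_univ i)
  nlinarith [abs_nonneg (x i), norm_nonneg x, sq_abs (x i)]

/-- Lattice points in a ball form a finite set. -/
lemma finite_ball (c : EuclideanSpace ℝ (Fin d)) (R : ℝ) :
    {g : Fin d → ℤ | ‖emb g - c‖ ≤ R}.Finite := by
  have hsub : {g : Fin d → ℤ | ‖emb g - c‖ ≤ R} ⊆
      Set.pi Set.univ (fun i => {z : ℤ | (z : ℝ) ∈ Set.Icc (c i - R) (c i + R)}) := by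
    intro g hg i _
    have h1 : |(g i : ℝ) - c i| ≤ R := by
      have := abs_coord_le_norm (emb g - c) i
      simp only [PiLp.sub_apply, emb_apply] at this
      exact this.trans hg
    constructor <;> [skip; skip] <;> cases' abs_le.mp h1 with hl hr <;> linarith
  apply Set.Finite.subset (Set.Finite.pi (fun i => ?_)) hsub
  have : {z : ℤ | (z : ℝ) ∈ Set.Icc (c i - R) (c i + R)} ⊆ Set.Icc ⌈c i - R⌉ ⌊c i + R⌋ := by
    intro z hz
    exact ⟨Int.ceil_le.mpr hz.1, Int.le_floor.mpr hz.2⟩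
  exact (Set.finite_Icc _ _).subset this

/-- A nonempty set of lattice points has a point nearest to any given center. -/
lemma exists_nearest (S : Set (Fin d → ℤ)) (hS : S.Nonempty) (c : EuclideanSpace ℝ (Fin d)) :
    ∃ t ∈ S, ∀ t' ∈ S, ‖emb t - c‖ ≤ ‖emb t' - c‖ := by
  obtain ⟨t₀, ht₀⟩ := hS
  have hfin : ({t | t ∈ S ∧ ‖emb t - c‖ ≤ ‖emb t₀ - c‖} : Set (Fin d → ℤ)).Finite :=
    (finite_ball c ‖emb t₀ - c‖).subset (fun t ht => ht.2)
  have hne : hfin.toFinset.Nonempty := ⟨t₀, by simp [ht₀]⟩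
  obtain ⟨t, htmem, htmin⟩ := hfin.toFinset.exists_min_image (fun t => ‖emb t - c‖) hne
  simp only [Set.Finite.mem_toFinset, Set.mem_setOf_eq] at htmem
  refine ⟨t, htmem.1, fun t' ht' => ?_⟩
  by_cases h : ‖emb t' - c‖ ≤ ‖emb t₀ - c‖
  · exact htmin t' (by simp [ht', h])
  · have := htmin t₀ (by simp [ht₀])
    push_neg at h
    linarith

section Dyn

variable {X Y : Type*} [MetricSpace X] [CompactSpace X] [MetricSpace Y]

/-- Uniform modulus of continuity for finitely many maps. -/
lemma modulus (T : (Fin d → ℤ) → X → X) (hTc : ∀ g, Continuous (T g))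
    (ε : ℝ) (hε : 0 < ε) (F : Finset (Fin d → ℤ)) :
    ∃ η > 0, ∀ p q : X, dist p q ≤ η → ∀ g ∈ F, dist (T g p) (T g q) ≤ ε := by
  classical
  induction F using Finset.induction with
  | empty => exact ⟨1, one_pos, by simp⟩
  | @insert g₀ F hg₀ ih =>
    obtain ⟨η, hη, hη2⟩ := ih
    have huc : UniformContinuous (T g₀) := CompactSpace.uniformContinuous_of_continuous (hTc g₀)
    obtain ⟨δ, hδ, hδ2⟩ := Metric.uniformContinuous_iff.mp huc ε hε
    refine ⟨min η (δ/2), by positivity, fun p q hpq g hg => ?_⟩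
    rcases Finset.mem_insert.mp hg with rfl | hg
    · have : dist p q < δ := by
        have := min_le_right η (δ/2); linarith [hpq.trans this]
      exact (hδ2 this).le
    · exact hη2 p q (hpq.trans (min_le_left _ _)) g hg

/-- Pigeonhole: enough points in a compact space contain a close pair. -/
lemma covering (η : ℝ) (hη : 0 < η) :
    ∃ k : ℕ, ∀ f : Fin k → X, ∃ i j, i ≠ j ∧ dist (f i) (f j) ≤ η := by
  classical
  have h := (isCompact_univ (X := X)).totallyBounded
  rw [Metric.totallyBounded_iff] at h
  obtain ⟨t, htfin, hcov⟩ := h (η/2) (by positivity)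
  refine ⟨htfin.toFinset.card + 1, fun f => ?_⟩
  have hmap : ∀ i : Fin (htfin.toFinset.card + 1), ∃ y ∈ htfin.toFinset,
      f i ∈ Metric.ball y (η/2) := by
    intro i
    have := hcov (Set.mem_univ (f i))
    simp only [Set.mem_iUnion] at this
    obtain ⟨y, hy, hmem⟩ := this
    exact ⟨y, htfin.mem_toFinset.mpr hy, hmem⟩
  choose φ hφ1 hφ2 using hmap
  have hcard : htfin.toFinset.card <
      (Finset.univ : Finset (Fin (htfin.toFinset.card + 1))).card := by simp
  obtain ⟨i, _, j, _, hij, hfij⟩ :=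
    Finset.exists_ne_map_eq_of_card_lt_of_maps_to hcard (fun i _ => hφ1 i)
  refine ⟨i, j, hij, ?_⟩
  have h1 := hφ2 i
  have h2 := hφ2 j
  rw [hfij] at h1
  rw [Metric.mem_ball] at h1 h2
  calc dist (f i) (f j) ≤ dist (f i) (φ j) + dist (φ j) (f j) := dist_triangle _ _ _
    _ ≤ η := by rw [dist_comm (φ j) (f j)] at *; linarith

/-- Arbitrarily large clusters inside a single fiber. -/
lemma cluster {π : X → Y} (hπnb : ¬ BoundedToOne π) (k : ℕ) :
    ∃ (x : Fin k → X) (y₀ : Y), Function.Injective x ∧ ∀ i, π (x i) = y₀ := by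
  classical
  rw [BoundedToOne] at hπnb
  push_neg at hπnb
  obtain ⟨y₀, s, hfib, hcard⟩ := hπnb k
  have hk : k ≤ s.card := le_of_lt hcard
  set e := s.equivFin
  refine ⟨fun i => (e.symm (Fin.castLE hk i) : X), y₀, ?_, ?_⟩
  · intro i j hij
    have h1 : e.symm (Fin.castLE hk i) = e.symm (Fin.castLE hk j) := Subtype.ext hij
    have h2 := e.symm.injective h1
    exact Fin.castLE_injective hk h2
  · intro i
    exact hfib _ (e.symm (Fin.castLE hk i)).2

/-- A lattice vector pointing deep into the half-space of `u`. -/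
lemma exists_deep (u : EuclideanSpace ℝ (Fin d)) (hu : ‖u‖ = 1) :
    ∃ s : Fin d → ℤ, ∑ i, (s i : ℝ) * u i ≤ -2 := by
  classical
  have hsum : ∑ i, (u i) ^ 2 = 1 := by
    have h1 : ‖u‖ ^ 2 = ∑ j, (u j) ^ 2 := by
      rw [EuclideanSpace.norm_eq, Real.sq_sqrt (by positivity)]
      simp [sq_abs]
    rw [hu] at h1; simpa using h1.symm
  have hex : ∃ i₀ : Fin d, u i₀ ≠ 0 := by
    by_contra h
    push_neg at h
    rw [Finset.sum_eq_zero (fun i _ => by rw [h i]; ring)] at hsum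
    norm_num at hsum
  obtain ⟨i₀, hi₀⟩ := hex
  have habs : 0 < |u i₀| := abs_pos.mpr hi₀
  obtain ⟨n, hn⟩ := exists_nat_gt (2 / |u i₀|)
  have hn2 : 2 < (n : ℝ) * |u i₀| := by
    rw [div_lt_iff₀ habs] at hn; linarith
  set s : Fin d → ℤ := fun i => if i = i₀ then (if 0 < u i₀ then -(n : ℤ) else (n : ℤ)) else 0
    with hs
  refine ⟨s, ?_⟩
  have hss : ∑ i, (s i : ℝ) * u i = (s i₀ : ℝ) * u i₀ := by
    apply Finset.sum_eq_single
    · intro i _ hi; simp [hs, hi]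
    · intro h; exact absurd (Finset.mem_univ i₀) h
  rw [hss]
  rcases lt_trichotomy (u i₀) 0 with hneg | hzero | hpos
  · have hval : (s i₀ : ℝ) = (n : ℝ) := by simp [hs, not_lt.mpr hneg.le, hneg.not_gt]
    rw [hval]
    rw [abs_of_neg hneg] at hn2
    nlinarith
  · exact absurd hzero hi₀
  · have hval : (s i₀ : ℝ) = -(n : ℝ) := by simp [hs, hpos]
    rw [hval]
    rw [abs_of_pos hpos] at hn2
    nlinarith

/-- Core: a distinct fiber pair close on `{⟨g,u⟩ ≤ -2}` witnesses `u ∈ NDl2`. -/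
lemma mem_ND (T : (Fin d → ℤ) → X → X)
    (hTadd : ∀ (g h : Fin d → ℤ) (x : X), T g (T h x) = T (g + h) x)
    (hTzero : ∀ x : X, T 0 x = x)
    (π : X → Y)
    (hπfib : ∀ (g : Fin d → ℤ) (x y : X), π x = π y → π (T g x) = π (T g y))
    (ε : ℝ) (u : EuclideanSpace ℝ (Fin d)) (hu : ‖u‖ = 1)
    (x y : X) (hxy : x ≠ y) (hπ : π x = π y)
    (hcl : ∀ g : Fin d → ℤ, ⟪emb g, u⟫ ≤ -2 → dist (T g x) (T g y) ≤ ε) :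
    u ∈ NDl2 T π ε := by
  obtain ⟨s, hs⟩ := exists_deep u hu
  have hs' : ⟪emb s, u⟫ ≤ -2 := by
    have hb := inner_sum (emb s) u
    simp only [emb_apply] at hb
    rw [hb]; exact hs
  refine ⟨hu, T s x, T s y, ?_, hπfib s x y hπ, ?_⟩
  · intro h
    apply hxy
    have := congrArg (T (-s)) h
    rwa [hTadd, hTadd, neg_add_cancel, hTzero, hTzero] at this
  · intro g hg
    rw [hTadd, hTadd]
    apply hcl
    rw [emb_add, inner_add_left]
    have hg' : ⟪emb g, u⟫ < 0 := by
      have hb := inner_sum (emb g) u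
      simp only [emb_apply] at hb
      rw [hb]; exact hg
    linarith

/-- Packing lemma: a fiber cluster such that at every real location, some pair of the
cluster has no `ε`-separation within distance `Λ`. -/
lemma pack (T : (Fin d → ℤ) → X → X) (hTc : ∀ g, Continuous (T g))
    (hTadd : ∀ (g h : Fin d → ℤ) (x : X), T g (T h x) = T (g + h) x)
    {π : X → Y} (hπnb : ¬ BoundedToOne π)
    (ε : ℝ) (hε : 0 < ε) (Λ : ℝ) :
    ∃ (k : ℕ) (x : Fin k → X) (y₀ : Y), Function.Injective x ∧ (∀ i, π (x i) = y₀) ∧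
      ∀ t : EuclideanSpace ℝ (Fin d), ∃ i j, i ≠ j ∧
        ∀ g : Fin d → ℤ, ‖emb g - t‖ ≤ Λ → dist (T g (x i)) (T g (x j)) ≤ ε := by
  classical
  set F := (finite_ball (0 : EuclideanSpace ℝ (Fin d)) (Λ + d + 1)).toFinset with hF
  obtain ⟨η, hη, hηmod⟩ := modulus T hTc ε hε F
  obtain ⟨k, hk⟩ := covering (X := X) η hη
  obtain ⟨x, y₀, hinj, hfib⟩ := cluster hπnb k
  refine ⟨k, x, y₀, hinj, hfib, fun t => ?_⟩
  set g₀ : Fin d → ℤ := fun i => ⌊t i⌋ with hg₀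
  have hround : ‖emb g₀ - t‖ ≤ (d : ℝ) + 1 := by
    have h1 : ‖emb g₀ - t‖^2 = ∑ i, ((⌊t i⌋ : ℝ) - t i)^2 := by
      rw [EuclideanSpace.norm_eq, Real.sq_sqrt (by positivity)]
      congr 1; ext i; simp [hg₀, sq_abs]
    have h2 : ∀ i : Fin d, ((⌊t i⌋ : ℝ) - t i)^2 ≤ 1 := by
      intro i
      have := Int.floor_le (t i)
      have := Int.lt_floor_add_one (t i)
      nlinarith
    have h3 : ‖emb g₀ - t‖^2 ≤ (d : ℝ) := by
      rw [h1]
      calc ∑ i, ((⌊t i⌋ : ℝ) - t i)^2 ≤ ∑ _i : Fin d, (1:ℝ) :=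
            Finset.sum_le_sum (fun i _ => h2 i)
        _ = (d : ℝ) := by simp
    nlinarith [norm_nonneg (emb g₀ - t), Nat.cast_nonneg (α := ℝ) d]
  obtain ⟨i, j, hij, hd⟩ := hk (fun i => T g₀ (x i))
  refine ⟨i, j, hij, fun g hg => ?_⟩
  have hmem : g - g₀ ∈ F := by
    rw [hF, Set.Finite.mem_toFinset]
    show ‖emb (g - g₀) - 0‖ ≤ Λ + d + 1
    rw [emb_sub, sub_zero]
    calc ‖emb g - emb g₀‖ ≤ ‖emb g - t‖ + ‖t - emb g₀‖ := by
          have := norm_sub_le_norm_sub_add_norm_sub (emb g) t (emb g₀)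
          simpa using this
      _ ≤ Λ + ((d:ℝ) + 1) := by
          rw [norm_sub_rev t (emb g₀)]; exact add_le_add hg hround
      _ = Λ + d + 1 := by ring
  have := hηmod _ _ hd (g - g₀) hmem
  rwa [hTadd, hTadd, sub_add_cancel] at this

/-- The per-`Λ` harvest: a strongly separated fiber pair together with a nearly-upward
unit direction `u` such that the pair is `ε`-close on a large tangent region of `H_u`. -/
lemma harvest (T : (Fin d → ℤ) → X → X) (hTc : ∀ g, Continuous (T g))
    (hTadd : ∀ (g h : Fin d → ℤ) (x : X), T g (T h x) = T (g + h) x)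
    {π : X → Y} (hπnb : ¬ BoundedToOne π)
    (hπfib : ∀ (g : Fin d → ℤ) (x y : X), π x = π y → π (T g x) = π (T g y))
    (ε : ℝ) (hε : 0 < ε) (z : EuclideanSpace ℝ (Fin d)) (hz : ‖z‖ = 1)
    (hNE : ¬ ∃ x y : X, x ≠ y ∧ π x = π y ∧ ∀ g, dist (T g x) (T g y) ≤ ε)
    (Λ : ℝ) (hΛ : 4 ≤ Λ) :
    ∃ (x y : X) (u : EuclideanSpace ℝ (Fin d)),
      π x = π y ∧ ε < dist x y ∧ ‖u‖ = 1 ∧ (-2/Λ ≤ ⟪u, z⟫) ∧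
      ∀ g : Fin d → ℤ, ⟪emb g, u⟫ ≤ -1 → ‖emb g‖^2 + 1 ≤ Λ → dist (T g x) (T g y) ≤ ε := by
  classical
  have hΛ0 : (0:ℝ) < Λ := by linarith
  obtain ⟨k, x, y₀, hinj, hfib, hPACK⟩ := pack T hTc hTadd hπnb ε hε Λ
  set S : Fin k → Fin k → Set (Fin d → ℤ) :=
    fun i j => {t | ε < dist (T t (x i)) (T t (x j))} with hSdef
  have hSne : ∀ i j, i ≠ j → (S i j).Nonempty := by
    intro i j hij
    by_contra h
    rw [Set.not_nonempty_iff_eq_empty] at h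
    apply hNE
    refine ⟨x i, x j, fun he => hij (hinj he), by rw [hfib i, hfib j], fun g => ?_⟩
    by_contra hlt
    push_neg at hlt
    have hg : g ∈ S i j := hlt
    rw [h] at hg
    exact hg
  have SAMPLE : ∃ (i j : Fin k) (c : EuclideanSpace ℝ (Fin d)) (t0 : Fin d → ℤ),
      i ≠ j ∧ t0 ∈ S i j ∧ (∀ t' ∈ S i j, ‖emb t0 - c‖ ≤ ‖emb t' - c‖) ∧
      Λ/2 ≤ ‖emb t0 - c‖ ∧ -2 * ‖emb t0 - c‖ ≤ Λ * ⟪emb t0 - c, z⟫ := by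
    by_contra hS
    push_neg at hS
    set ray : ℕ → EuclideanSpace ℝ (Fin d) := fun s => (-(s:ℝ)) • z with hray
    have burnt : ∀ i j, i ≠ j → ∃ s₀ : ℕ, ∀ s : ℕ, s₀ ≤ s →
        ∃ t ∈ S i j, ‖emb t - ray s‖ ≤ Λ := by
      intro i j hij
      by_cases hfresh : ∃ s₁ : ℕ, ∀ t ∈ S i j, Λ < ‖emb t - ray s₁‖
      · obtain ⟨s₁, hs₁⟩ := hfresh
        choose N hN hNmin using fun m : ℕ =>
          exists_nearest (S i j) (hSne i j hij) (ray (s₁ + m))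
        set r : ℕ → ℝ := fun m => ‖emb (N m) - ray (s₁ + m)‖ with hr
        have hrnn : ∀ m, 0 ≤ r m := fun m => norm_nonneg _
        have hraystep : ∀ m : ℕ, ray (s₁ + m + 1) = ray (s₁ + m) - z := by
          intro m
          show (-(((s₁ + m + 1 : ℕ)):ℝ)) • z = (-(((s₁ + m : ℕ)):ℝ)) • z - z
          have hc : (-(((s₁ + m + 1 : ℕ)):ℝ)) = (-(((s₁ + m : ℕ)):ℝ)) - 1 := by
            push_cast; ring
          rw [hc, sub_smul, one_smul]
        have hexp : ∀ m : ℕ, ‖emb (N m) - ray (s₁ + m + 1)‖^2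
            = (r m)^2 + 2*⟪emb (N m) - ray (s₁ + m), z⟫ + 1 := by
          intro m
          have hx2 : emb (N m) - ray (s₁ + m + 1) = (emb (N m) - ray (s₁ + m)) + z := by
            rw [hraystep m]; abel
          rw [hx2, norm_add_sq_real, hz]
          simp only [hr]
          ring
        have hsucc : ∀ m : ℕ, (r (m+1))^2 ≤ ‖emb (N m) - ray (s₁ + m + 1)‖^2 := by
          intro m
          apply pow_le_pow_left₀ (hrnn (m+1))
          exact hNmin (m+1) (N m) (hN m)
        have key : ∀ m : ℕ, Λ/2 ≤ r m → (r (m+1))^2 ≤ (r m)^2 - 1 := by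
          intro m hm
          have hw := hS i j (ray (s₁ + m)) (N m) hij (hN m) (hNmin m) hm
          have hinner : ⟪emb (N m) - ray (s₁ + m), z⟫ ≤ -1 := by
            nlinarith [hm, hw, hΛ0]
          have h1 := hsucc m
          rw [hexp m] at h1
          linarith
        have lip : ∀ m : ℕ, (r (m+1))^2 ≤ (r m + 1)^2 := by
          intro m
          have h1 : ⟪emb (N m) - ray (s₁ + m), z⟫ ≤ r m := by
            have h2 := real_inner_le_norm (emb (N m) - ray (s₁ + m)) z
            rw [hz, mul_one] at h2
            exact h2
          have h3 := hsucc m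
          rw [hexp m] at h3
          nlinarith
        have hdesc : ∃ m₀, r m₀ < Λ/2 := by
          by_contra hall
          push_neg at hall
          have aux : ∀ m : ℕ, (r m)^2 ≤ (r 0)^2 - m := by
            intro m
            induction m with
            | zero => simp
            | succ n ih =>
              have := key n (hall n)
              push_cast
              push_cast at ih
              linarith
          obtain ⟨m, hm⟩ := exists_nat_gt ((r 0)^2)
          have h1 := aux m
          have h2 := sq_nonneg (r m)
          linarith
        obtain ⟨m₀, hm₀⟩ := hdesc
        have shadow : ∀ m, m₀ ≤ m → r m ≤ Λ/2 + 1 := by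
          intro m hm
          induction m, hm using Nat.le_induction with
          | base => linarith
          | succ n hn ih =>
            by_cases hc : Λ/2 ≤ r n
            · have := key n hc
              nlinarith [hrnn (n+1), hΛ0]
            · push_neg at hc
              have := lip n
              nlinarith [hrnn (n+1), hrnn n]
        refine ⟨s₁ + m₀, fun s hs => ?_⟩
        have h3 : m₀ ≤ s - s₁ := by omega
        have h2 : s₁ + (s - s₁) = s := by omega
        refine ⟨N (s - s₁), hN (s - s₁), ?_⟩
        have h5 : ray s = ray (s₁ + (s - s₁)) := by rw [h2]
        rw [h5]
        have h4 := shadow (s - s₁) h3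
        simp only [hr] at h4
        linarith
      · push_neg at hfresh
        exact ⟨0, fun s _ => hfresh s⟩
    have hbfun : ∀ p : Fin k × Fin k, ∃ s₀ : ℕ, p.1 ≠ p.2 → ∀ s, s₀ ≤ s →
        ∃ t ∈ S p.1 p.2, ‖emb t - ray s‖ ≤ Λ := by
      intro p
      by_cases h : p.1 ≠ p.2
      · obtain ⟨s₀, hs₀⟩ := burnt p.1 p.2 h
        exact ⟨s₀, fun _ => hs₀⟩
      · exact ⟨0, fun hc => absurd hc h⟩
    choose sfun hsfun using hbfun
    set sbar := Finset.univ.sup sfun with hsbar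
    obtain ⟨i, j, hij, hfreshpair⟩ := hPACK (ray sbar)
    obtain ⟨t, htS, htle⟩ := hsfun (i, j) hij sbar (Finset.le_sup (Finset.mem_univ (i,j)))
    have hclose := hfreshpair t htle
    have hopen : ε < dist (T t (x i)) (T t (x j)) := htS
    linarith
  obtain ⟨i, j, c, t0, hij, ht0S, hmin, hρ, htan⟩ := SAMPLE
  set w : EuclideanSpace ℝ (Fin d) := emb t0 - c with hw
  set ρ : ℝ := ‖w‖ with hρdef
  have hρpos : (0:ℝ) < ρ := by
    have : Λ/2 ≤ ρ := hρ
    linarith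
  set u : EuclideanSpace ℝ (Fin d) := ρ⁻¹ • w with hu
  refine ⟨T t0 (x i), T t0 (x j), u, hπfib t0 _ _ (by rw [hfib i, hfib j]), ht0S, ?_, ?_, ?_⟩
  · rw [hu, norm_smul, Real.norm_eq_abs, abs_of_pos (inv_pos.mpr hρpos), ← hρdef]
    field_simp
  · have h1 : ⟪u, z⟫ = ρ⁻¹ * ⟪w, z⟫ := by rw [hu]; exact real_inner_smul_left w z ρ⁻¹
    rw [h1, div_le_iff₀ hΛ0]
    have h2 := mul_le_mul_of_nonneg_left htan (le_of_lt (inv_pos.mpr hρpos))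
    have h3 : ρ⁻¹ * (-2 * ρ) = -2 := by field_simp
    calc (-2 : ℝ) = ρ⁻¹ * (-2 * ρ) := h3.symm
      _ ≤ ρ⁻¹ * (Λ * ⟪w, z⟫) := h2
      _ = ρ⁻¹ * ⟪w, z⟫ * Λ := by ring
  · intro g hg1 hg2
    have hsm : ⟪emb g, u⟫ = ρ⁻¹ * ⟪emb g, w⟫ := by
      rw [hu]; exact real_inner_smul_right (emb g) w ρ⁻¹
    have hgw : ⟪emb g, w⟫ ≤ -ρ := by
      rw [hsm] at hg1
      have h2 := mul_le_mul_of_nonneg_left hg1 hρpos.le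
      have h3 : ρ * (ρ⁻¹ * ⟪emb g, w⟫) = ⟪emb g, w⟫ := by field_simp
      rw [h3] at h2
      linarith
    have hball : ‖emb (g + t0) - c‖ < ρ := by
      have hEq : emb (g + t0) - c = emb g + w := by rw [emb_add, hw]; abel
      rw [hEq]
      have hsq : ‖emb g + w‖^2 ≤ ρ^2 - 1 := by
        rw [norm_add_sq_real, ← hρdef]
        have h2ρ : Λ ≤ 2*ρ := by linarith
        nlinarith
      nlinarith [norm_nonneg (emb g + w), hρpos]
    have hnotS : (g + t0) ∉ S i j := by
      intro hmem
      have := hmin (g + t0) hmem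
      linarith
    have hd : dist (T (g + t0) (x i)) (T (g + t0) (x j)) ≤ ε := not_lt.mp hnotS
    rw [hTadd, hTadd]
    exact hd

lemma coord_tendsto {u : ℕ → EuclideanSpace ℝ (Fin d)} {v : EuclideanSpace ℝ (Fin d)}
    (h : Tendsto u atTop (𝓝 v)) (a : EuclideanSpace ℝ (Fin d)) :
    Tendsto (fun n => ⟪a, u n⟫) atTop (𝓝 ⟪a, v⟫) :=
  (Filter.Tendsto.inner tendsto_const_nhds h)

/-- `NDl2 T π ε` is sequentially closed. -/
lemma ND_closed (T : (Fin d → ℤ) → X → X) (hTc : ∀ g, Continuous (T g))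
    (hTadd : ∀ (g h : Fin d → ℤ) (x : X), T g (T h x) = T (g + h) x)
    (hTzero : ∀ x : X, T 0 x = x)
    {π : X → Y}
    (hπfib : ∀ (g : Fin d → ℤ) (x y : X), π x = π y → π (T g x) = π (T g y))
    (hπc : Continuous π)
    (ε : ℝ) (hε : 0 < ε) (vs : ℕ → EuclideanSpace ℝ (Fin d))
    (hvs : ∀ j, vs j ∈ NDl2 T π ε) (v : EuclideanSpace ℝ (Fin d))
    (hlim : Tendsto vs atTop (𝓝 v)) : v ∈ NDl2 T π ε := by
  classical
  have hnorm : ‖v‖ = 1 := by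
    have h1 : Tendsto (fun j => ‖vs j‖) atTop (𝓝 ‖v‖) := (continuous_norm.tendsto _).comp hlim
    have h2 : (fun j => ‖vs j‖) = fun _ => (1:ℝ) := funext fun j => (hvs j).1
    rw [h2] at h1
    exact tendsto_nhds_unique h1 tendsto_const_nhds
  by_cases hA : ∃ x y : X, x ≠ y ∧ π x = π y ∧ ∀ g, dist (T g x) (T g y) ≤ ε
  · obtain ⟨x, y, h1, h2, h3⟩ := hA
    exact ⟨hnorm, x, y, h1, h2, fun g _ => h3 g⟩
  · push_neg at hA
    have hwit : ∀ j, ∃ x y : X, x ≠ y ∧ π x = π y ∧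
        ∀ g ∈ halfSpaceZ (vs j), dist (T g x) (T g y) ≤ ε := fun j => (hvs j).2
    choose xs ys hne hfib hcl using hwit
    have hsep : ∀ j, ∃ g : Fin d → ℤ, ε < dist (T g (xs j)) (T g (ys j)) := by
      intro j
      obtain ⟨g, hg⟩ := hA (xs j) (ys j) (hne j) (hfib j)
      exact ⟨g, hg⟩
    set I : ℕ → Set ℝ :=
      fun j => (fun t => ⟪emb t, vs j⟫) '' {g | ε < dist (T g (xs j)) (T g (ys j))} with hI
    have hIne : ∀ j, (I j).Nonempty := by
      intro j
      obtain ⟨g, hg⟩ := hsep j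
      exact ⟨⟪emb g, vs j⟫, Set.mem_image_of_mem _ hg⟩
    have hIbdd : ∀ j, ∀ a ∈ I j, (0:ℝ) ≤ a := by
      intro j a ha
      obtain ⟨t, ht, rfl⟩ := ha
      by_contra hneg
      push_neg at hneg
      have hhs : t ∈ halfSpaceZ (vs j) := by
        show ∑ i, (t i : ℝ) * vs j i < 0
        have hb := inner_sum (emb t) (vs j)
        simp only [emb_apply] at hb
        rw [← hb]
        exact hneg
      have := hcl j t hhs
      simp only [Set.mem_setOf_eq] at ht
      linarith
    have hanchor : ∀ j, ∃ t : Fin d → ℤ, (ε < dist (T t (xs j)) (T t (ys j))) ∧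
        ⟪emb t, vs j⟫ < sInf (I j) + 1 := by
      intro j
      obtain ⟨a, ha, halt⟩ := Real.lt_sInf_add_pos (hIne j) one_pos
      obtain ⟨t, ht, rfl⟩ := ha
      exact ⟨t, ht, halt⟩
    choose ts hts1 hts2 using hanchor
    have hcl' : ∀ j, ∀ g : Fin d → ℤ, ⟪emb g, vs j⟫ ≤ -1 →
        dist (T g (T (ts j) (xs j))) (T g (T (ts j) (ys j))) ≤ ε := by
      intro j g hg
      rw [hTadd, hTadd]
      by_contra hbad
      push_neg at hbad
      have hmem : ⟪emb (g + ts j), vs j⟫ ∈ I j := Set.mem_image_of_mem _ hbad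
      have hlb := csInf_le ⟨0, fun a ha => hIbdd j a ha⟩ hmem
      have h1 : ⟪emb (g + ts j), vs j⟫ < sInf (I j) := by
        rw [emb_add, inner_add_left]
        have := hts2 j
        linarith
      linarith
    obtain ⟨p, -, φ, hφ, hφlim⟩ := isCompact_univ.tendsto_subseq
      (x := fun j => (T (ts j) (xs j), T (ts j) (ys j))) (fun j => Set.mem_univ _)
    obtain ⟨xb, yb⟩ := p
    have hx : Tendsto (fun n => T (ts (φ n)) (xs (φ n))) atTop (𝓝 xb) :=
      (continuous_fst.tendsto _).comp hφlim
    have hy : Tendsto (fun n => T (ts (φ n)) (ys (φ n))) atTop (𝓝 yb) :=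
      (continuous_snd.tendsto _).comp hφlim
    have hvφ : Tendsto (fun n => vs (φ n)) atTop (𝓝 v) := hlim.comp hφ.tendsto_atTop
    have hdist : ε ≤ dist xb yb := by
      apply ge_of_tendsto (hx.dist hy)
      exact Eventually.of_forall (fun n => (hts1 (φ n)).le)
    have hneq : xb ≠ yb := by
      intro h
      rw [h, dist_self] at hdist
      linarith
    have hfibb : π xb = π yb := by
      have h1 : Tendsto (fun n => π (T (ts (φ n)) (xs (φ n)))) atTop (𝓝 (π xb)) :=
        (hπc.tendsto _).comp hx
      have h2 : Tendsto (fun n => π (T (ts (φ n)) (ys (φ n)))) atTop (𝓝 (π yb)) :=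
        (hπc.tendsto _).comp hy
      have heq : (fun n => π (T (ts (φ n)) (xs (φ n)))) =
          fun n => π (T (ts (φ n)) (ys (φ n))) :=
        funext fun n => hπfib _ _ _ (hfib (φ n))
      rw [heq] at h1
      exact tendsto_nhds_unique h1 h2
    apply mem_ND T hTadd hTzero π hπfib ε v hnorm xb yb hneq hfibb
    intro g hg
    have hit : Tendsto (fun n => ⟪emb g, vs (φ n)⟫) atTop (𝓝 ⟪emb g, v⟫) :=
      coord_tendsto hvφ (emb g)
    have hevt : ∀ᶠ n in atTop, ⟪emb g, vs (φ n)⟫ ≤ -1 := by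
      have hlt : ⟪emb g, v⟫ < -1 := by linarith
      exact (hit.eventually_lt_const hlt).mono fun n h => h.le
    have hdt : Tendsto (fun n => dist (T g (T (ts (φ n)) (xs (φ n))))
        (T g (T (ts (φ n)) (ys (φ n))))) atTop (𝓝 (dist (T g xb) (T g yb))) :=
      (((hTc g).tendsto _).comp hx).dist (((hTc g).tendsto _).comp hy)
    apply le_of_tendsto hdt
    exact hevt.mono (fun n h => hcl' (φ n) g h)

/-- For every `ε`, the closed hemisphere around `z` contains an `ε`-nondeterministic
vector. -/
lemma hemisphere (T : (Fin d → ℤ) → X → X) (hTc : ∀ g, Continuous (T g))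
    (hTadd : ∀ (g h : Fin d → ℤ) (x : X), T g (T h x) = T (g + h) x)
    (hTzero : ∀ x : X, T 0 x = x)
    {π : X → Y} (hπnb : ¬ BoundedToOne π)
    (hπfib : ∀ (g : Fin d → ℤ) (x y : X), π x = π y → π (T g x) = π (T g y))
    (hπc : Continuous π)
    (ε : ℝ) (hε : 0 < ε) (z : EuclideanSpace ℝ (Fin d)) (hz : ‖z‖ = 1) :
    ∃ v, v ∈ NDl2 T π ε ∧ 0 ≤ ⟪v, z⟫ := by
  classical
  by_cases hNE : ∃ x y : X, x ≠ y ∧ π x = π y ∧ ∀ g, dist (T g x) (T g y) ≤ ε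
  · obtain ⟨x, y, h1, h2, h3⟩ := hNE
    refine ⟨z, ⟨hz, x, y, h1, h2, fun g _ => h3 g⟩, ?_⟩
    rw [real_inner_self_eq_norm_mul_norm, hz]
    norm_num
  · have hH : ∀ j : ℕ, ∃ (x y : X) (u : EuclideanSpace ℝ (Fin d)),
        π x = π y ∧ ε < dist x y ∧ ‖u‖ = 1 ∧ (-2/((j:ℝ)+4) ≤ ⟪u, z⟫) ∧
        ∀ g : Fin d → ℤ, ⟪emb g, u⟫ ≤ -1 → ‖emb g‖^2 + 1 ≤ (j:ℝ)+4 →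
          dist (T g x) (T g y) ≤ ε := by
      intro j
      exact harvest T hTc hTadd hπnb hπfib ε hε z hz hNE ((j:ℝ)+4)
        (by have : (0:ℝ) ≤ j := Nat.cast_nonneg j; linarith)
    choose xs ys us hfib hsep hun htan hcl using hH
    obtain ⟨p, -, φ₁, hφ₁, hφ₁lim⟩ := isCompact_univ.tendsto_subseq
      (x := fun j => (xs j, ys j)) (fun j => Set.mem_univ _)
    obtain ⟨xb, yb⟩ := p
    obtain ⟨ub, hub, φ₂, hφ₂, hφ₂lim⟩ :=
      (isCompact_sphere (0 : EuclideanSpace ℝ (Fin d)) 1).tendsto_subseq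
      (x := fun n => us (φ₁ n)) (fun n => by simp [mem_sphere_zero_iff_norm, hun])
    set φ : ℕ → ℕ := φ₁ ∘ φ₂ with hφdef
    have hφ : StrictMono φ := hφ₁.comp hφ₂
    have hpair : Tendsto (fun n => (xs (φ n), ys (φ n))) atTop (𝓝 (xb, yb)) :=
      hφ₁lim.comp hφ₂.tendsto_atTop
    have hx : Tendsto (fun n => xs (φ n)) atTop (𝓝 xb) :=
      (continuous_fst.tendsto _).comp hpair
    have hy : Tendsto (fun n => ys (φ n)) atTop (𝓝 yb) :=
      (continuous_snd.tendsto _).comp hpair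
    have hu : Tendsto (fun n => us (φ n)) atTop (𝓝 ub) := hφ₂lim
    have hubnorm : ‖ub‖ = 1 := by
      rw [mem_sphere_zero_iff_norm] at hub
      exact hub
    have hdist : ε ≤ dist xb yb := by
      apply ge_of_tendsto (hx.dist hy)
      exact Eventually.of_forall (fun n => (hsep (φ n)).le)
    have hneq : xb ≠ yb := by
      intro h
      rw [h, dist_self] at hdist
      linarith
    have hfibb : π xb = π yb := by
      have h1 : Tendsto (fun n => π (xs (φ n))) atTop (𝓝 (π xb)) := (hπc.tendsto _).comp hx
      have h2 : Tendsto (fun n => π (ys (φ n))) atTop (𝓝 (π yb)) := (hπc.tendsto _).comp hy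
      have heq : (fun n => π (xs (φ n))) = fun n => π (ys (φ n)) :=
        funext fun n => hfib (φ n)
      rw [heq] at h1
      exact tendsto_nhds_unique h1 h2
    have htanb : 0 ≤ ⟪ub, z⟫ := by
      have h1 : Tendsto (fun n => ⟪us (φ n), z⟫) atTop (𝓝 ⟪ub, z⟫) :=
        Filter.Tendsto.inner hu tendsto_const_nhds
      have h2 : Tendsto (fun n => -2/((φ n : ℝ)+4)) atTop (𝓝 0) := by
        apply Tendsto.div_atTop (tendsto_const_nhds)
        apply tendsto_atTop_add_const_right
        exact tendsto_natCast_atTop_atTop.comp hφ.tendsto_atTop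
      exact le_of_tendsto_of_tendsto' h2 h1 (fun n => htan (φ n))
    refine ⟨ub, ?_, htanb⟩
    apply mem_ND T hTadd hTzero π hπfib ε ub hubnorm xb yb hneq hfibb
    intro g hg
    have hit : Tendsto (fun n => ⟪emb g, us (φ n)⟫) atTop (𝓝 ⟪emb g, ub⟫) :=
      coord_tendsto hu (emb g)
    have hevt1 : ∀ᶠ n in atTop, ⟪emb g, us (φ n)⟫ ≤ -1 := by
      have hlt : ⟪emb g, ub⟫ < -1 := by linarith
      exact (hit.eventually_lt_const hlt).mono fun n h => h.le
    have hevt2 : ∀ᶠ n in atTop, ‖emb g‖^2 + 1 ≤ (φ n : ℝ) + 4 := by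
      have ht : Tendsto (fun n => ((φ n : ℝ) + 4)) atTop atTop :=
        tendsto_atTop_add_const_right _ _ (tendsto_natCast_atTop_atTop.comp hφ.tendsto_atTop)
      exact ht.eventually_ge_atTop _
    have hdt : Tendsto (fun n => dist (T g (xs (φ n))) (T g (ys (φ n)))) atTop
        (𝓝 (dist (T g xb) (T g yb))) :=
      (((hTc g).tendsto _).comp hx).dist (((hTc g).tendsto _).comp hy)
    apply le_of_tendsto hdt
    filter_upwards [hevt1, hevt2] with n h1 h2
    exact hcl (φ n) g h1 h2

end Dyn

end NDAux

/-- If `π` is not bounded to one, every closed half-space `{x : ⟨x,c⟩ ≥ 0}` of `ℝ^d`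
contains a `π`-nondeterministic vector. -/
theorem closed_half_space_contains_nondeterministic_vector
    {d : ℕ} {X Y : Type*} [MetricSpace X] [CompactSpace X] [MetricSpace Y] [CompactSpace Y]
    (T : (Fin d → ℤ) → X → X)
    (hTc : ∀ g, Continuous (T g))
    (hTadd : ∀ (g h : Fin d → ℤ) (x : X), T g (T h x) = T (g + h) x)
    (hTzero : ∀ x : X, T 0 x = x)
    (S : (Fin d → ℤ) → Y → Y)
    (hSc : ∀ g, Continuous (S g))
    (hSadd : ∀ (g h : Fin d → ℤ) (y : Y), S g (S h y) = S (g + h) y)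
    (hSzero : ∀ y : Y, S 0 y = y)
    (π : X → Y) (hπc : Continuous π) (hπs : Function.Surjective π)
    (hπeq : ∀ (g : Fin d → ℤ) (x : X), π (T g x) = S g (π x))
    (hπnb : ¬ BoundedToOne π) :
    ∀ c : EuclideanSpace ℝ (Fin d), c ≠ 0 →
      ∃ v ∈ ⋂ ε > (0 : ℝ), NDl2 T π ε, 0 ≤ ∑ i, v i * c i := by
  classical
  intro c hc
  have hπfib : ∀ (g : Fin d → ℤ) (x y : X), π x = π y → π (T g x) = π (T g y) := by
    intro g x y h
    rw [hπeq, hπeq, h]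
  set z : EuclideanSpace ℝ (Fin d) := ‖c‖⁻¹ • c with hzdef
  have hz : ‖z‖ = 1 := norm_smul_inv_norm hc
  have hH : ∀ j : ℕ, ∃ v, v ∈ NDl2 T π (1/((j:ℝ)+1)) ∧ 0 ≤ ⟪v, z⟫ := by
    intro j
    exact NDAux.hemisphere T hTc hTadd hTzero hπnb hπfib hπc (1/((j:ℝ)+1))
      (by positivity) z hz
  choose vs hvs htan using hH
  obtain ⟨v, hvsph, φ, hφ, hφlim⟩ :=
    (isCompact_sphere (0 : EuclideanSpace ℝ (Fin d)) 1).tendsto_subseq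
      (x := vs) (fun j => by simp [mem_sphere_zero_iff_norm, (hvs j).1])
  refine ⟨v, ?_, ?_⟩
  · simp only [Set.mem_iInter]
    intro ε hε
    obtain ⟨J, hJ⟩ := exists_nat_one_div_lt hε
    have hmono : ∀ n : ℕ, vs (φ (n + J)) ∈ NDl2 T π ε := by
      intro n
      obtain ⟨h1, x, y, h2, h3, h4⟩ := hvs (φ (n + J))
      refine ⟨h1, x, y, h2, h3, fun g hg => (h4 g hg).trans ?_⟩
      have hb1 : (J : ℝ) ≤ (φ (n + J) : ℝ) := by
        have : J ≤ φ (n + J) := le_trans (Nat.le_add_left J n) (hφ.le_apply)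
        exact_mod_cast this
      have hb2 : 1/((φ (n+J):ℝ)+1) ≤ 1/((J:ℝ)+1) := by
        apply one_div_le_one_div_of_le (by positivity) (by linarith)
      linarith [hJ]
    have hwlim : Tendsto (fun n => vs (φ (n + J))) atTop (𝓝 v) :=
      hφlim.comp (tendsto_add_atTop_nat J)
    exact NDAux.ND_closed T hTc hTadd hTzero hπfib hπc ε hε _ hmono v hwlim
  · have h1 : Tendsto (fun n => ⟪vs (φ n), z⟫) atTop (𝓝 ⟪v, z⟫) :=
      Filter.Tendsto.inner hφlim tendsto_const_nhds
    have h2 : 0 ≤ ⟪v, z⟫ := ge_of_tendsto h1 (Eventually.of_forall (fun n => htan (φ n)))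
    have hcn : ‖c‖ ≠ 0 := norm_ne_zero_iff.mpr hc
    have h3 : ⟪v, c⟫ = ‖c‖ * ⟪v, z⟫ := by
      rw [hzdef, real_inner_smul_right]
      field_simp
    have h4 : 0 ≤ ⟪v, c⟫ := by
      rw [h3]; exact mul_nonneg (norm_nonneg c) h2
    have h5 : ⟪v, c⟫ = ∑ i, v i * c i := NDAux.inner_sum v c
    rw [← h5]
    exact h4
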